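/- For a reversible consensus matrix P with conductance matrix C = nΠP, the weighted average effective resistance equals (1/n) times the trace of the Green matrix: R̄_w(C) = (1/n) tr G(P), where G(P) = Σ_{t≥0} (P^t − 𝟙πᵀ). -/

import Mathlib

open Matrix

/-- A consensus matrix: entrywise nonnegative, row-stochastic, irreducible
(for every pair of indices some power has a positive entry), with positive diagonal. -/
def IsConsensus {n : ℕ} (P : Matrix (Fin n) (Fin n) ℝ) : Prop :=
  (∀ i j, 0 ≤ P i j) ∧ (∀ i, (∑ j, P i j) = 1) ∧
  (∀ i j, ∃ k : ℕ, 0 < (P ^ k) i j) ∧ (∀ i, 0 < P i i)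

/-- `mu` is the invariant measure of `P`: strictly positive, sums to `1`,
and is a left fixed vector of `P`. -/
def IsInvMeasure {n : ℕ} (P : Matrix (Fin n) (Fin n) ℝ) (mu : Fin n → ℝ) : Prop :=
  (∀ i, 0 < mu i) ∧ (∑ i, mu i) = 1 ∧ (∀ j, (∑ i, mu i * P i j) = mu j)

/-- The time reversal `P* = Π⁻¹ Pᵀ Π` with `Π = diag(mu)`. -/
noncomputable def Pstar {n : ℕ} (P : Matrix (Fin n) (Fin n) ℝ) (mu : Fin n → ℝ) :
    Matrix (Fin n) (Fin n) ℝ :=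
  Matrix.diagonal (fun i => (mu i)⁻¹) * Pᵀ * Matrix.diagonal mu

/-- The graph Laplacian `L(C) = diag(C 𝟙) − C`. -/
def lap {n : ℕ} (C : Matrix (Fin n) (Fin n) ℝ) : Matrix (Fin n) (Fin n) ℝ :=
  Matrix.diagonal (fun i => ∑ j, C i j) - C

/-- A conductance matrix: symmetric, entrywise nonnegative, irreducible. -/
def IsConductance {n : ℕ} (C : Matrix (Fin n) (Fin n) ℝ) : Prop :=
  Cᵀ = C ∧ (∀ i j, 0 ≤ C i j) ∧ (∀ i j, ∃ k : ℕ, 0 < (C ^ k) i j)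

/-- The effective resistance between `a` and `b`: `v a - v b` for a solution `v`
of `L(C) v = e_a - e_b` (junk value `0` if no solution exists). -/
noncomputable def effRes {n : ℕ} (C : Matrix (Fin n) (Fin n) ℝ) (a b : Fin n) : ℝ :=
  open Classical in
  if h : ∃ v : Fin n → ℝ, lap C *ᵥ v = Pi.single a 1 - Pi.single b 1 then
    h.choose a - h.choose b
  else 0

/-- The average effective resistance `(1/(2 n²)) Σ_{u,v} R_{uv}(C)`. -/
noncomputable def avgRes {n : ℕ} (C : Matrix (Fin n) (Fin n) ℝ) : ℝ :=
  (1 / (2 * (n : ℝ) ^ 2)) * ∑ u, ∑ v, effRes C u v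

/-- The unit-conductance matrix of the undirected graph associated with `P`:
edge `{u,v}` iff `P u v ≠ 0` or `P v u ≠ 0`. -/
noncomputable def adjMat {n : ℕ} (P : Matrix (Fin n) (Fin n) ℝ) : Matrix (Fin n) (Fin n) ℝ :=
  Matrix.of fun i j => if i ≠ j ∧ (P i j ≠ 0 ∨ P j i ≠ 0) then (1 : ℝ) else 0

/-- The LQ cost `J(P) = (1/n) Σ_{t≥0} ‖P^t − 𝟙 muᵀ‖_F²`. -/
noncomputable def LQcost {n : ℕ} (P : Matrix (Fin n) (Fin n) ℝ) (mu : Fin n → ℝ) : ℝ :=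
  (1 / (n : ℝ)) *
    ∑' t : ℕ, ∑ i, ∑ j,
      ((P ^ t - Matrix.vecMulVec (fun _ => 1) mu : Matrix (Fin n) (Fin n) ℝ) i j) ^ 2

/-- The weighted LQ cost `J_w(P)`. -/
noncomputable def LQcostW {n : ℕ} (P : Matrix (Fin n) (Fin n) ℝ) (mu : Fin n → ℝ) : ℝ :=
  ∑' t : ℕ, Matrix.trace ((1 - Matrix.vecMulVec mu (fun _ => 1)) * Pᵀ ^ t *
    Matrix.diagonal mu * P ^ t * (1 - Matrix.vecMulVec (fun _ => 1) mu))

/-- The Green matrix `G(P) = Σ_{t≥0} (P^t − 𝟙 muᵀ)`. -/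
noncomputable def Green {n : ℕ} (P : Matrix (Fin n) (Fin n) ℝ) (mu : Fin n → ℝ) :
    Matrix (Fin n) (Fin n) ℝ :=
  ∑' t : ℕ, (P ^ t - Matrix.vecMulVec (fun _ => 1) mu)

/-- Out-degree (excluding self-loops) of node `i` in the directed graph of `P`. -/
noncomputable def outDeg {n : ℕ} (P : Matrix (Fin n) (Fin n) ℝ) (i : Fin n) : ℕ :=
  (Finset.univ.filter fun j => j ≠ i ∧ P i j ≠ 0).card

/-- In-degree (excluding self-loops) of node `j` in the directed graph of `P`. -/
noncomputable def inDeg {n : ℕ} (P : Matrix (Fin n) (Fin n) ℝ) (j : Fin n) : ℕ :=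
  (Finset.univ.filter fun i => i ≠ j ∧ P i j ≠ 0).card

/-- The weighted average effective resistance `(1/2) Σ_{u,v} R_{uv}(C) mu_u mu_v`. -/
noncomputable def wAvgRes {n : ℕ} (C : Matrix (Fin n) (Fin n) ℝ) (mu : Fin n → ℝ) : ℝ :=
  (1 / 2) * ∑ u, ∑ v, effRes C u v * mu u * mu v

private lemma pow_entry_nonneg {n : ℕ} {P : Matrix (Fin n) (Fin n) ℝ}
    (h : ∀ i j, 0 ≤ P i j) (t : ℕ) (i j : Fin n) : 0 ≤ (P ^ t) i j := by
  induction t generalizing i j with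
  | zero => simp [Matrix.one_apply]; split <;> norm_num
  | succ t ih =>
    rw [pow_succ, Matrix.mul_apply]
    exact Finset.sum_nonneg fun k _ => mul_nonneg (ih i k) (h k j)

private lemma pow_row_sum {n : ℕ} {P : Matrix (Fin n) (Fin n) ℝ}
    (h : ∀ i, ∑ j, P i j = 1) (t : ℕ) (i : Fin n) : ∑ j, (P ^ t) i j = 1 := by
  induction t generalizing i with
  | zero => simp [Matrix.one_apply]
  | succ t ih =>
    simp only [pow_succ, Matrix.mul_apply]
    rw [Finset.sum_comm]
    calc ∑ k, ∑ j, (P ^ t) i k * P k j = ∑ k, (P ^ t) i k * ∑ j, P k j := by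
          simp [Finset.mul_sum]
      _ = 1 := by simp [h, ih i]

private lemma pow_invariant {n : ℕ} {P : Matrix (Fin n) (Fin n) ℝ} {mu : Fin n → ℝ}
    (h : ∀ j, ∑ i, mu i * P i j = mu j) (t : ℕ) (j : Fin n) :
    ∑ i, mu i * (P ^ t) i j = mu j := by
  induction t generalizing j with
  | zero => simp [Matrix.one_apply]
  | succ t ih =>
    simp only [pow_succ, Matrix.mul_apply, Finset.mul_sum]
    rw [Finset.sum_comm]
    calc ∑ k, ∑ i, mu i * ((P ^ t) i k * P k j)
        = ∑ k, (∑ i, mu i * (P ^ t) i k) * P k j := by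
          congr 1; ext k; rw [Finset.sum_mul]; congr 1; ext i; ring
      _ = mu j := by simp only [ih]; exact h j

private lemma contraction {n : ℕ} {P : Matrix (Fin n) (Fin n) ℝ} {mu : Fin n → ℝ}
    (hnon : ∀ i j, 0 ≤ P i j) (hrow : ∀ i, ∑ j, P i j = 1)
    (hmupos : ∀ i, 0 < mu i) (hmusum : ∑ i, mu i = 1)
    (hinv : ∀ j, ∑ i, mu i * P i j = mu j)
    {K : ℕ} {ε : ℝ} (hε : 0 < ε) (hεle : ∀ i j, ε ≤ (P ^ K) i j) :
    ∀ q i j, |(P ^ (K * q)) i j - mu j| ≤ (1 - ε) ^ q := by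
  have hmule : ∀ j, mu j ≤ 1 := by
    intro j
    calc mu j ≤ ∑ i, mu i :=
          Finset.single_le_sum (fun i _ => (hmupos i).le) (Finset.mem_univ j)
      _ = 1 := hmusum
  intro q
  induction q with
  | zero =>
    intro i j
    simp only [Nat.mul_zero, pow_zero, Matrix.one_apply]
    split
    · rw [abs_of_nonneg (by linarith [hmule j])]; linarith [hmupos j]
    · rw [abs_of_nonpos (by linarith [hmupos j])]; linarith [hmule j]
  | succ q ih =>
    intro i j
    have hco : ∀ k, 0 ≤ (P ^ K) i k - ε * mu k := by
      intro k
      have : ε * mu k ≤ ε * 1 := by nlinarith [hmule k, (hmupos k).le]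
      linarith [hεle i k]
    have hmuzero : ∑ k, mu k * ((P ^ (K * q)) k j - mu j) = 0 := by
      simp only [mul_sub]
      rw [Finset.sum_sub_distrib, pow_invariant hinv, ← Finset.sum_mul, hmusum]
      ring
    have hexp : (P ^ (K * (q + 1))) i j - mu j
        = ∑ k, ((P ^ K) i k - ε * mu k) * ((P ^ (K * q)) k j - mu j) := by
      have h1 : (P ^ (K * (q + 1))) i j = ∑ k, (P ^ K) i k * (P ^ (K * q)) k j := by
        rw [Nat.mul_succ, Nat.add_comm, pow_add, Matrix.mul_apply]
      have h2 : ∑ k, (P ^ K) i k * mu j = mu j := by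
        rw [← Finset.sum_mul, pow_row_sum hrow, one_mul]
      calc (P ^ (K * (q + 1))) i j - mu j
          = ∑ k, (P ^ K) i k * ((P ^ (K * q)) k j - mu j) := by
            simp only [mul_sub]; rw [Finset.sum_sub_distrib, h1, h2]
        _ = ∑ k, ((P ^ K) i k - ε * mu k) * ((P ^ (K * q)) k j - mu j)
            + ε * ∑ k, mu k * ((P ^ (K * q)) k j - mu j) := by
            rw [Finset.mul_sum, ← Finset.sum_add_distrib]; congr 1; ext k; ring
        _ = _ := by rw [hmuzero]; ring
    rw [hexp]
    calc |∑ k, ((P ^ K) i k - ε * mu k) * ((P ^ (K * q)) k j - mu j)|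
        ≤ ∑ k, |((P ^ K) i k - ε * mu k) * ((P ^ (K * q)) k j - mu j)| :=
          Finset.abs_sum_le_sum_abs _ _
      _ ≤ ∑ k, ((P ^ K) i k - ε * mu k) * (1 - ε) ^ q := by
          refine Finset.sum_le_sum fun k _ => ?_
          rw [abs_mul, abs_of_nonneg (hco k)]
          exact mul_le_mul_of_nonneg_left (ih k j) (hco k)
      _ = (1 - ε) * (1 - ε) ^ q := by
          rw [← Finset.sum_mul, Finset.sum_sub_distrib, pow_row_sum hrow,
            ← Finset.mul_sum, hmusum, mul_one]
      _ = (1 - ε) ^ (q + 1) := by ring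
private lemma pow_pos_mono {n : ℕ} {P : Matrix (Fin n) (Fin n) ℝ}
    (hnon : ∀ i j, 0 ≤ P i j) (hdiag : ∀ i, 0 < P i i) {k : ℕ} {i j : Fin n}
    (h : 0 < (P ^ k) i j) : ∀ m, k ≤ m → 0 < (P ^ m) i j := by
  intro m hm
  induction m with
  | zero => simpa [Nat.le_zero.mp hm] using h
  | succ m ih =>
    rcases Nat.lt_or_ge k (m+1) with hlt | hge
    · have hk : 0 < (P ^ m) i j := ih (Nat.lt_succ_iff.mp hlt)
      rw [pow_succ, Matrix.mul_apply]
      have : 0 < (P ^ m) i j * P j j := mul_pos hk (hdiag j)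
      refine lt_of_lt_of_le this ?_
      exact Finset.single_le_sum (f := fun l => (P ^ m) i l * P l j)
        (fun l _ => mul_nonneg (pow_entry_nonneg hnon m i l) (hnon l j)) (Finset.mem_univ j)
    · have : k = m + 1 := le_antisymm hm hge
      simpa [this] using h

private lemma primitive {n : ℕ} {P : Matrix (Fin n) (Fin n) ℝ}
    (hnon : ∀ i j, 0 ≤ P i j) (hdiag : ∀ i, 0 < P i i)
    (hirr : ∀ i j, ∃ k : ℕ, 0 < (P ^ k) i j) :
    ∃ K : ℕ, 0 < K ∧ ∀ i j, 0 < (P ^ K) i j := by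
  choose k hk using hirr
  refine ⟨1 + Finset.univ.sup (fun p : Fin n × Fin n => k p.1 p.2), by positivity, ?_⟩
  intro i j
  refine pow_pos_mono hnon hdiag (hk i j) _ ?_
  calc k i j ≤ Finset.univ.sup (fun p : Fin n × Fin n => k p.1 p.2) :=
        Finset.le_sup (f := fun p : Fin n × Fin n => k p.1 p.2) (Finset.mem_univ (i, j))
    _ ≤ _ := Nat.le_add_left _ _
private lemma summable_geom_div {K : ℕ} (hK : 0 < K) {c : ℝ} (hc0 : 0 ≤ c) (hc1 : c < 1) :
    Summable (fun t : ℕ => c ^ (t / K)) := by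
  haveI : NeZero K := ⟨hK.ne'⟩
  rw [← (Nat.divModEquiv K).symm.summable_iff]
  have hone : Summable (fun _ : Fin K => (1 : ℝ)) := Summable.of_finite
  have h2 : Summable (fun p : ℕ × Fin K => c ^ p.1 * 1) :=
    (summable_geometric_of_lt_one hc0 hc1).mul_of_nonneg hone
      (fun q => pow_nonneg hc0 q) (fun _ => zero_le_one)
  refine h2.congr fun p => ?_
  obtain ⟨q, r⟩ := p
  have h3 : ((Nat.divModEquiv K).symm (q, r) : ℕ) = q * K + r := rfl
  show c ^ q * 1 = c ^ (((Nat.divModEquiv K).symm (q, r) : ℕ) / K)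
  rw [h3, mul_one, Nat.add_comm, Nat.add_mul_div_right _ _ hK, Nat.div_eq_of_lt r.2,
    Nat.zero_add]

private lemma global_bound {n : ℕ} {P : Matrix (Fin n) (Fin n) ℝ} {mu : Fin n → ℝ}
    (hnon : ∀ i j, 0 ≤ P i j) (hrow : ∀ i, ∑ j, P i j = 1)
    (hmupos : ∀ i, 0 < mu i) (hmusum : ∑ i, mu i = 1)
    (hinv : ∀ j, ∑ i, mu i * P i j = mu j)
    {K : ℕ} {ε : ℝ} (hε : 0 < ε) (hε1 : ε ≤ 1) (hεle : ∀ i j, ε ≤ (P ^ K) i j)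
    (t : ℕ) (i j : Fin n) : |(P ^ t) i j - mu j| ≤ (1 - ε) ^ (t / K) := by
  have ht : t % K + K * (t / K) = t := Nat.mod_add_div t K
  have h1 : (P ^ t) i j = ∑ k, (P ^ (t % K)) i k * (P ^ (K * (t / K))) k j := by
    conv_lhs => rw [← ht]
    rw [pow_add, Matrix.mul_apply]
  have h2 : ∑ k, (P ^ (t % K)) i k * mu j = mu j := by
    rw [← Finset.sum_mul, pow_row_sum hrow, one_mul]
  have h3 : (P ^ t) i j - mu j
      = ∑ k, (P ^ (t % K)) i k * ((P ^ (K * (t / K))) k j - mu j) := by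
    simp only [mul_sub]; rw [Finset.sum_sub_distrib, ← h1, h2]
  rw [h3]
  calc |∑ k, (P ^ (t % K)) i k * ((P ^ (K * (t / K))) k j - mu j)|
      ≤ ∑ k, |(P ^ (t % K)) i k * ((P ^ (K * (t / K))) k j - mu j)| :=
        Finset.abs_sum_le_sum_abs _ _
    _ ≤ ∑ k, (P ^ (t % K)) i k * (1 - ε) ^ (t / K) := by
        refine Finset.sum_le_sum fun k _ => ?_
        rw [abs_mul, abs_of_nonneg (pow_entry_nonneg hnon _ i k)]
        exact mul_le_mul_of_nonneg_left
          (contraction hnon hrow hmupos hmusum hinv hε hεle (t / K) k j)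
          (pow_entry_nonneg hnon _ i k)
    _ = (1 - ε) ^ (t / K) := by rw [← Finset.sum_mul, pow_row_sum hrow, one_mul]

private lemma fixed_const {n : ℕ} {P : Matrix (Fin n) (Fin n) ℝ}
    (hnon : ∀ i j, 0 ≤ P i j) (hrow : ∀ i, ∑ j, P i j = 1)
    {K : ℕ} (hKpos : ∀ i j, 0 < (P ^ K) i j)
    (u : Fin n → ℝ) (hu : ∀ i, u i = ∑ j, P i j * u j) (i j : Fin n) :
    u i = u j := by
  have hpow : ∀ t i, u i = ∑ j, (P ^ t) i j * u j := by
    intro t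
    induction t with
    | zero => intro i; simp [Matrix.one_apply]
    | succ t ih =>
      intro i
      calc u i = ∑ j, P i j * u j := hu i
        _ = ∑ j, P i j * ∑ k, (P ^ t) j k * u k := by
            refine Finset.sum_congr rfl fun j _ => ?_; rw [ih j]
        _ = ∑ k, (∑ j, P i j * (P ^ t) j k) * u k := by
            simp only [Finset.mul_sum]; rw [Finset.sum_comm]
            refine Finset.sum_congr rfl fun k _ => ?_
            rw [Finset.sum_mul]
            refine Finset.sum_congr rfl fun j _ => ?_; ring
        _ = ∑ k, (P ^ (t + 1)) i k * u k := by
            simp only [pow_succ', Matrix.mul_apply]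
  have : Nonempty (Fin n) := ⟨i⟩
  obtain ⟨i₀, -, hmax⟩ := Finset.exists_max_image Finset.univ u Finset.univ_nonempty
  have hconst : ∀ j, u j = u i₀ := by
    intro j
    by_contra hne
    have hlt : u j < u i₀ := lt_of_le_of_ne (hmax j (Finset.mem_univ j)) hne
    have h1 : ∑ k, (P ^ K) i₀ k * u k < ∑ k, (P ^ K) i₀ k * u i₀ := by
      refine Finset.sum_lt_sum (fun k _ => ?_) ⟨j, Finset.mem_univ j, ?_⟩
      · exact mul_le_mul_of_nonneg_left (hmax k (Finset.mem_univ k)) (hKpos i₀ k).le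
      · exact (mul_lt_mul_iff_right₀ (hKpos i₀ j)).mpr hlt
    rw [← hpow K i₀] at h1
    rw [← Finset.sum_mul, pow_row_sum hrow, one_mul] at h1
    exact lt_irrefl _ h1
  rw [hconst i, hconst j]


section GreenLemmasA
variable {n : ℕ} {P : Matrix (Fin n) (Fin n) ℝ} {mu : Fin n → ℝ}

private lemma green_apply
    (hsum : ∀ i j, Summable (fun t : ℕ => (P ^ t) i j - mu j)) (i j : Fin n) :
    Green P mu i j = ∑' t : ℕ, ((P ^ t) i j - mu j) := by
  have hs : Summable (fun t : ℕ => P ^ t - Matrix.vecMulVec (fun _ => 1) mu) := by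
    refine Pi.summable.mpr ?_
    intro i'
    refine Pi.summable.mpr ?_
    intro j'
    simpa [Matrix.sub_apply, Matrix.vecMulVec_apply] using hsum i' j'
  erw [Green, tsum_apply hs, tsum_apply]
  · exact tsum_congr fun t => by simp [Matrix.sub_apply, Matrix.vecMulVec_apply]
  · exact Pi.summable.mp hs i
end GreenLemmasA


section GreenLemmasB
variable {n : ℕ} {P : Matrix (Fin n) (Fin n) ℝ} {mu : Fin n → ℝ}

private lemma g_row_sum (hrow : ∀ i, ∑ j, P i j = 1) (hmusum : ∑ i, mu i = 1)
    (hsum : ∀ i j, Summable (fun t : ℕ => (P ^ t) i j - mu j)) (i : Fin n) :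
    ∑ j, ∑' t : ℕ, ((P ^ t) i j - mu j) = 0 := by
  rw [← Summable.tsum_finsetSum (fun j _ => hsum i j)]
  have h : ∀ t : ℕ, ∑ j, ((P ^ t) i j - mu j) = 0 := by
    intro t
    rw [Finset.sum_sub_distrib, pow_row_sum hrow, hmusum, sub_self]
  simp only [h, tsum_zero]

private lemma green_rel (hrow : ∀ i, ∑ j, P i j = 1)
    (hsum : ∀ i j, Summable (fun t : ℕ => (P ^ t) i j - mu j)) (i j : Fin n) :
    (∑' t : ℕ, ((P ^ t) i j - mu j)) - ∑ k, P i k * ∑' t : ℕ, ((P ^ t) k j - mu j)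
      = (if i = j then 1 else 0) - mu j := by
  have h1 : ∑ k, P i k * ∑' t : ℕ, ((P ^ t) k j - mu j)
      = ∑' t : ℕ, ((P ^ (t + 1)) i j - mu j) := by
    calc ∑ k, P i k * ∑' t : ℕ, ((P ^ t) k j - mu j)
        = ∑ k, ∑' t : ℕ, P i k * ((P ^ t) k j - mu j) := by
          refine Finset.sum_congr rfl fun k _ => ?_
          exact (Summable.tsum_mul_left _ (hsum k j)).symm
      _ = ∑' t : ℕ, ∑ k, P i k * ((P ^ t) k j - mu j) :=
          (Summable.tsum_finsetSum (fun k _ => (hsum k j).mul_left _)).symm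
      _ = ∑' t : ℕ, ((P ^ (t + 1)) i j - mu j) := by
          refine tsum_congr fun t => ?_
          simp only [mul_sub]
          rw [Finset.sum_sub_distrib, ← Finset.sum_mul, hrow, one_mul]
          congr 1
          rw [pow_succ', Matrix.mul_apply]
  rw [h1]
  have h2 := Summable.tsum_eq_zero_add (hsum i j)
  have h0 : (P ^ 0) i j - mu j = (if i = j then 1 else 0) - mu j := by
    rw [pow_zero, Matrix.one_apply]
  linarith [h2, h0.symm.le]
end GreenLemmasB


/-- For a reversible consensus matrix `P` with `C = nΠP`,
`R̄_w(C) = (1/n) tr G(P)`. -/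
theorem stmt7 {n : ℕ} (P : Matrix (Fin n) (Fin n) ℝ) (mu : Fin n → ℝ)
    (hP : IsConsensus P) (hmu : IsInvMeasure P mu)
    (hrev : (Matrix.diagonal mu * P)ᵀ = Matrix.diagonal mu * P) :
    wAvgRes ((n : ℝ) • (Matrix.diagonal mu * P)) mu =
      (1 / (n : ℝ)) * Matrix.trace (Green P mu) := by

  obtain ⟨hnon, hrow, hirr, hdiag⟩ := hP
  obtain ⟨hmupos, hmusum, hinv⟩ := hmu
  rcases Nat.eq_zero_or_pos n with hn | hn
  · subst hn
    simp [wAvgRes, Matrix.trace]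
  -- setup
  have hn' : (n : ℝ) ≠ 0 := Nat.cast_ne_zero.mpr hn.ne'
  obtain ⟨K, hK, hKpos⟩ := primitive hnon hdiag hirr
  have hne : (Finset.univ : Finset (Fin n × Fin n)).Nonempty := by
    refine ⟨(⟨0, hn⟩, ⟨0, hn⟩), Finset.mem_univ _⟩
  set ε : ℝ := Finset.univ.inf' hne (fun p : Fin n × Fin n => (P ^ K) p.1 p.2) with hεdef
  have hε : 0 < ε := by
    rw [hεdef, Finset.lt_inf'_iff]
    exact fun p _ => hKpos p.1 p.2
  have hεle : ∀ i j, ε ≤ (P ^ K) i j := fun i j =>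
    Finset.inf'_le _ (Finset.mem_univ (i, j))
  have hε1 : ε ≤ 1 := by
    have h1 := hεle ⟨0, hn⟩ ⟨0, hn⟩
    have h2 : (P ^ K) ⟨0, hn⟩ ⟨0, hn⟩ ≤ 1 := by
      rw [← pow_row_sum hrow K ⟨0, hn⟩]
      exact Finset.single_le_sum (fun j _ => pow_entry_nonneg hnon K _ j)
        (Finset.mem_univ _)
    linarith
  have hsum : ∀ i j, Summable (fun t : ℕ => (P ^ t) i j - mu j) := by
    intro i j
    refine Summable.of_abs (Summable.of_nonneg_of_le (fun t => abs_nonneg _)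
      (fun t => global_bound hnon hrow hmupos hmusum hinv hε hε1 hεle t i j)
      (summable_geom_div hK (by linarith) (by linarith)))
  set g : Fin n → Fin n → ℝ := fun i j => ∑' t : ℕ, ((P ^ t) i j - mu j) with hgdef
  set C : Matrix (Fin n) (Fin n) ℝ := (n : ℝ) • (Matrix.diagonal mu * P) with hCdef
  have hCapp : ∀ i j, C i j = (n : ℝ) * (mu i * P i j) := by
    intro i j
    rw [hCdef, Matrix.smul_apply, Matrix.diagonal_mul, smul_eq_mul]
  have hCrow : ∀ i, ∑ j, C i j = (n : ℝ) * mu i := by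
    intro i
    simp only [hCapp]
    rw [← Finset.mul_sum]
    congr 1
    rw [← Finset.mul_sum, hrow, mul_one]
  have hlap : ∀ (v : Fin n → ℝ) (i : Fin n),
      (lap C *ᵥ v) i = (n : ℝ) * mu i * (v i - ∑ j, P i j * v j) := by
    intro v i
    have h1 : (lap C *ᵥ v) i = (∑ j, C i j) * v i - ∑ j, C i j * v j := by
      have hd : (Matrix.diagonal (fun i => ∑ j, C i j) *ᵥ v) i = (∑ j, C i j) * v i := by
        simp [Matrix.mulVec, dotProduct, Matrix.diagonal_apply]
      have hc : (C *ᵥ v) i = ∑ j, C i j * v j := by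
        simp [Matrix.mulVec, dotProduct]
      rw [lap, Matrix.sub_mulVec, Pi.sub_apply, hd, hc]
    rw [h1, hCrow]
    have h2 : ∑ j, C i j * v j = (n : ℝ) * mu i * ∑ j, P i j * v j := by
      rw [Finset.mul_sum]
      refine Finset.sum_congr rfl fun j _ => ?_
      rw [hCapp]; ring
    rw [h2]; ring
  -- the explicit solution and effRes evaluation
  have heff : ∀ a b : Fin n, effRes C a b
      = (1 / (n : ℝ)) * (g a a / mu a - g a b / mu b)
        - (1 / (n : ℝ)) * (g b a / mu a - g b b / mu b) := by
    intro a b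
    set va : Fin n → ℝ := fun x => (1 / (n : ℝ)) * (g x a / mu a - g x b / mu b)
      with hvadef
    have hva : lap C *ᵥ va = Pi.single a 1 - Pi.single b 1 := by
      funext i
      rw [hlap]
      have hsa : ∑ j, P i j * va j
          = (1 / (n : ℝ)) * ((∑ j, P i j * g j a) / mu a
            - (∑ j, P i j * g j b) / mu b) := by
        rw [Finset.sum_div, Finset.sum_div, ← Finset.sum_sub_distrib,
          Finset.mul_sum]
        refine Finset.sum_congr rfl fun j _ => ?_
        rw [hvadef]; ring
      rw [hsa, hvadef]
      beta_reduce
      have hga : g i a - ∑ k, P i k * g k a = (if i = a then 1 else 0) - mu a :=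
        green_rel hrow hsum i a
      have hgb : g i b - ∑ k, P i k * g k b = (if i = b then 1 else 0) - mu b :=
        green_rel hrow hsum i b
      have expand : (n : ℝ) * mu i *
          ((1 / (n : ℝ)) * (g i a / mu a - g i b / mu b)
            - (1 / (n : ℝ)) * ((∑ j, P i j * g j a) / mu a
              - (∑ j, P i j * g j b) / mu b))
          = mu i * ((g i a - ∑ j, P i j * g j a) / mu a
            - (g i b - ∑ j, P i j * g j b) / mu b) := by
        field_simp
        ring
      rw [expand, hga, hgb, Pi.sub_apply, Pi.single_apply, Pi.single_apply]
      have hmua := (hmupos a).ne'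
      have hmub := (hmupos b).ne'
      have hmui := (hmupos i).ne'
      by_cases hia : i = a <;> by_cases hib : i = b <;>
        subst_vars <;> simp_all <;> field_simp <;> ring
    have hex : ∃ v : Fin n → ℝ, lap C *ᵥ v = Pi.single a 1 - Pi.single b 1 :=
      ⟨va, hva⟩
    have heq : effRes C a b = hex.choose a - hex.choose b := by
      rw [effRes, dif_pos hex]
    rw [heq]
    have hw := hex.choose_spec
    set w := hex.choose with hwdef
    -- w - va is harmonic
    have hharm : ∀ i, (w i - va i) = ∑ j, P i j * (w j - va j) := by
      intro i
      have h0 : lap C *ᵥ (w - va) = 0 := by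
        rw [Matrix.mulVec_sub, hw, hva, sub_self]
      have h1 : (lap C *ᵥ (w - va)) i = 0 := by rw [h0]; rfl
      rw [hlap] at h1
      have h2 : (w - va) i - ∑ j, P i j * (w - va) j = 0 := by
        have hnz : (n : ℝ) * mu i ≠ 0 := mul_ne_zero hn' (hmupos i).ne'
        exact (mul_eq_zero.mp h1).resolve_left hnz
      have h3 : (w - va) i = ∑ j, P i j * (w - va) j := by linarith
      simpa [Pi.sub_apply] using h3
    have hconst := fixed_const hnon hrow hKpos (fun x => w x - va x) hharm a b
    have : w a - w b = va a - va b := by linarith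
    rw [this, hvadef]
  -- final computation
  have htr : Matrix.trace (Green P mu) = ∑ a, g a a := by
    rw [Matrix.trace]
    refine Finset.sum_congr rfl fun a _ => ?_
    rw [Matrix.diag_apply, green_apply hsum, hgdef]
  rw [wAvgRes, htr]
  have hsummand : ∀ a b : Fin n, effRes C a b * mu a * mu b
      = (1 / (n : ℝ)) * (g a a * mu b - g a b * mu a - g b a * mu b + g b b * mu a) := by
    intro a b
    rw [heff a b]
    have hmua := (hmupos a).ne'
    have hmub := (hmupos b).ne'
    field_simp
    ring
  calc (1 / 2 : ℝ) * ∑ u, ∑ v, effRes C u v * mu u * mu v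
      = (1 / 2 : ℝ) * ∑ u, ∑ v, (1 / (n : ℝ)) *
          (g u u * mu v - g u v * mu u - g v u * mu v + g v v * mu u) := by
        congr 1
        exact Finset.sum_congr rfl fun u _ => Finset.sum_congr rfl fun v _ =>
          hsummand u v
    _ = (1 / 2 : ℝ) * ((1 / (n : ℝ)) * ∑ u, ∑ v,
          (g u u * mu v - g u v * mu u - g v u * mu v + g v v * mu u)) := by
        simp only [Finset.mul_sum]
    _ = (1 / (n : ℝ)) * ∑ a, g a a := by
        have e1 : ∑ u : Fin n, ∑ v : Fin n, g u u * mu v = ∑ a, g a a := by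
          refine Finset.sum_congr rfl fun u _ => ?_
          rw [← Finset.mul_sum, hmusum, mul_one]
        have e2 : ∑ u : Fin n, ∑ v : Fin n, g u v * mu u = 0 := by
          refine Finset.sum_eq_zero fun u _ => ?_
          rw [← Finset.sum_mul]
          rw [hgdef]
          rw [g_row_sum hrow hmusum hsum u, zero_mul]
        have e3 : ∑ u : Fin n, ∑ v : Fin n, g v u * mu v = 0 := by
          rw [Finset.sum_comm]
          refine Finset.sum_eq_zero fun v _ => ?_
          rw [← Finset.sum_mul, hgdef, g_row_sum hrow hmusum hsum v, zero_mul]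
        have e4 : ∑ u : Fin n, ∑ v : Fin n, g v v * mu u = ∑ a, g a a := by
          rw [Finset.sum_comm]
          refine Finset.sum_congr rfl fun v _ => ?_
          rw [← Finset.mul_sum, hmusum, mul_one]
        simp only [Finset.sum_add_distrib, Finset.sum_sub_distrib]
        rw [e1, e2, e3, e4]
        ring
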